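/- (Theorem 2, Lasso interference decomposition.) Fix x ∈ ℝ^m with x ≥ 0, a number of parallel updates P, and indices i_1, …, i_P ∈ {1,…,m} (repetitions allowed). For each j let δx_{i_j} = max{ −x_{i_j} , −(∇F(x))_{i_j} }, and let Δx = Σ_{j=1}^P δx_{i_j} e^{i_j} be the collective update. Then F(x + Δx) − F(x) ≤ −(1/2) Σ_{j=1}^P (δx_{i_j})² + (1/2) Σ_{j ≠ k} (AᵀA)_{i_j, i_k} δx_{i_j} δx_{i_k}, i.e., the change in objective is bounded by a sequential-progress term plus an interference term involving inner products of the chosen feature columns. -/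

import Mathlib

open Matrix Finset

noncomputable def grad {m : ℕ} (F : (Fin m → ℝ) → ℝ) (x : Fin m → ℝ) (j : Fin m) : ℝ :=
  fderiv ℝ F x (Pi.single j 1)

lemma grad_lasso {n m : ℕ} (A : Matrix (Fin n) (Fin m) ℝ) (y : Fin n → ℝ) (lam : ℝ)
    (x : Fin m → ℝ) (j : Fin m) :
    grad (fun x => (1 / 2) * ∑ i, (A.mulVec x i - y i) ^ 2 + lam * ∑ j, x j) x j
      = (∑ i, A i j * (A.mulVec x i - y i)) + lam := by
  set Li : Fin n → (Fin m → ℝ) →L[ℝ] ℝ :=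
    fun i => ∑ k, A i k • (ContinuousLinearMap.proj k : (Fin m → ℝ) →L[ℝ] ℝ) with hLidef
  have hLi : ∀ i : Fin n, HasFDerivAt (fun v : Fin m → ℝ => A.mulVec v i - y i) (Li i) x := by
    intro i
    have hfun : (fun v : Fin m → ℝ => A.mulVec v i - y i) = fun v => (Li i) v - y i := by
      funext v
      simp [hLidef, Matrix.mulVec, dotProduct]
    rw [hfun]
    exact ((Li i).hasFDerivAt).sub_const (y i)
  have hsq : ∀ i : Fin n, HasFDerivAt (fun v : Fin m → ℝ => (A.mulVec v i - y i) ^ 2)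
      ((A.mulVec x i - y i) • Li i + (A.mulVec x i - y i) • Li i) x := by
    intro i
    have := (hLi i).fun_mul (hLi i)
    simpa [pow_two] using this
  have hsum := HasFDerivAt.fun_sum (fun i (_ : i ∈ Finset.univ) => hsq i)
  have hq := hsum.const_mul (1/2 : ℝ)
  have hlin : HasFDerivAt (fun v : Fin m → ℝ => ∑ k, v k)
      (∑ k, (ContinuousLinearMap.proj k : (Fin m → ℝ) →L[ℝ] ℝ)) x := by
    have hfun : (fun v : Fin m → ℝ => ∑ k, v k)
        = fun v => (∑ k, (ContinuousLinearMap.proj k : (Fin m → ℝ) →L[ℝ] ℝ)) v := by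
      funext v; simp
    rw [hfun]
    exact (∑ k, (ContinuousLinearMap.proj k : (Fin m → ℝ) →L[ℝ] ℝ)).hasFDerivAt
  have hF := hq.fun_add (hlin.const_mul lam)
  have hfd := hF.fderiv
  unfold grad
  rw [hfd]
  simp [hLidef, ContinuousLinearMap.sum_apply, Pi.single_apply, mul_ite, Finset.mul_sum]
  exact Finset.sum_congr rfl fun i _ => by ring

theorem lasso_interference_decomposition {n m : ℕ}
    (A : Matrix (Fin n) (Fin m) ℝ) (y : Fin n → ℝ) (lam : ℝ) (hlam : 0 ≤ lam)
    (hA : ∀ j : Fin m, ∑ i, (A i j) ^ 2 = 1)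
    (F : (Fin m → ℝ) → ℝ)
    (hF : F = fun x => (1 / 2) * ∑ i, (A.mulVec x i - y i) ^ 2 + lam * ∑ j, x j)
    (x : Fin m → ℝ) (hx : 0 ≤ x)
    (P : ℕ) (idx : Fin P → Fin m)
    (δ : Fin P → ℝ) (hδ : ∀ j, δ j = max (-(x (idx j))) (-(grad F x (idx j))))
    (Δx : Fin m → ℝ) (hΔx : Δx = ∑ j : Fin P, Pi.single (idx j) (δ j)) :
    F (x + Δx) - F x ≤
      -(1 / 2) * ∑ j : Fin P, (δ j) ^ 2 +
        (1 / 2) * ∑ j : Fin P, ∑ k ∈ Finset.univ.erase j,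
          (Aᵀ * A) (idx j) (idx k) * δ j * δ k := by
  set r : Fin n → ℝ := fun i => A.mulVec x i - y i with hr
  set g : Fin m → ℝ := fun j => (∑ i, A i j * r i) + lam with hg
  have hδ' : ∀ p, δ p = max (-(x (idx p))) (-(g (idx p))) := by
    intro p
    rw [hδ p, hF, grad_lasso A y lam x (idx p)]
  have hs : ∀ i, A.mulVec Δx i = ∑ p : Fin P, δ p * A i (idx p) := by
    intro i
    rw [hΔx]
    simp only [Matrix.mulVec, dotProduct, Finset.sum_apply, Pi.single_apply, Finset.mul_sum,
      mul_ite, mul_zero]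
    rw [Finset.sum_comm]
    simp [mul_comm]
  have hsumΔ : ∑ k, Δx k = ∑ p : Fin P, δ p := by
    rw [hΔx]
    simp only [Finset.sum_apply]
    rw [Finset.sum_comm]
    simp
  have hAtA : ∀ j k : Fin m, (Aᵀ * A) j k = ∑ i, A i j * A i k := by
    intro j k
    simp [Matrix.mul_apply, Matrix.transpose_apply]
  -- expansion
  have key : F (x + Δx) - F x = (∑ p : Fin P, δ p * g (idx p))
      + (1/2) * ∑ p : Fin P, ∑ q : Fin P,
          (Aᵀ * A) (idx p) (idx q) * δ p * δ q := by
    have h1 : ∀ i, A.mulVec (x + Δx) i - y i = r i + ∑ p : Fin P, δ p * A i (idx p) := by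
      intro i
      rw [Matrix.mulVec_add, hr]
      simp [hs i]
      ring
    have h2 : ∑ i, (A.mulVec (x + Δx) i - y i) ^ 2
        = ∑ i, (r i ^ 2 + 2 * (r i * ∑ p : Fin P, δ p * A i (idx p))
            + (∑ p : Fin P, δ p * A i (idx p)) ^ 2) := by
      refine Finset.sum_congr rfl fun i _ => ?_
      rw [h1 i]; ring
    have h3 : ∑ i, r i * ∑ p : Fin P, δ p * A i (idx p)
        = ∑ p : Fin P, δ p * ∑ i, A i (idx p) * r i := by
      simp only [Finset.mul_sum]
      rw [Finset.sum_comm]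
      exact Finset.sum_congr rfl fun p _ => Finset.sum_congr rfl fun i _ => by ring
    have h4 : ∑ i, (∑ p : Fin P, δ p * A i (idx p)) ^ 2
        = ∑ p : Fin P, ∑ q : Fin P, (Aᵀ * A) (idx p) (idx q) * δ p * δ q := by
      have : ∀ i, (∑ p : Fin P, δ p * A i (idx p)) ^ 2
          = ∑ p : Fin P, ∑ q : Fin P, (δ p * A i (idx p)) * (δ q * A i (idx q)) := by
        intro i; rw [pow_two, Finset.sum_mul_sum]
      simp only [this]
      rw [Finset.sum_comm]
      refine Finset.sum_congr rfl fun p _ => ?_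
      rw [Finset.sum_comm]
      refine Finset.sum_congr rfl fun q _ => ?_
      rw [hAtA, Finset.sum_mul, Finset.sum_mul]
      exact Finset.sum_congr rfl fun i _ => by ring
    rw [hF]
    simp only []
    rw [h2]
    simp only [Finset.sum_add_distrib, Pi.add_apply, ← hr]
    rw [h4, Finset.sum_congr rfl (fun k _ => rfl), hsumΔ]
    have h5 : ∑ k, (x k + Δx k) = ∑ k, x k + ∑ p : Fin P, δ p := by
      rw [Finset.sum_add_distrib, hsumΔ]
    have h6 : ∑ i, 2 * (r i * ∑ p : Fin P, δ p * A i (idx p))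
        = 2 * ∑ p : Fin P, δ p * ∑ i, A i (idx p) * r i := by
      rw [← h3, Finset.mul_sum]
    rw [h6]
    have h7 : ∑ p : Fin P, δ p * g (idx p)
        = ∑ p : Fin P, δ p * ∑ i, A i (idx p) * r i + (∑ p : Fin P, δ p) * lam := by
      rw [hg]
      simp only [mul_add, Finset.sum_add_distrib, Finset.sum_mul]
    rw [h7]
    ring
  have hdiag : ∀ p : Fin P, (Aᵀ * A) (idx p) (idx p) = 1 := by
    intro p
    rw [hAtA]
    simpa [pow_two] using hA (idx p)
  have hsplit : ∑ p : Fin P, ∑ q : Fin P, (Aᵀ * A) (idx p) (idx q) * δ p * δ q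
      = ∑ p : Fin P, δ p ^ 2 + ∑ p : Fin P, ∑ q ∈ Finset.univ.erase p,
          (Aᵀ * A) (idx p) (idx q) * δ p * δ q := by
    rw [← Finset.sum_add_distrib]
    refine Finset.sum_congr rfl fun p _ => ?_
    rw [← Finset.add_sum_erase Finset.univ _ (Finset.mem_univ p), hdiag p]
    ring
  have hineq : ∀ p : Fin P, δ p * g (idx p) ≤ -δ p ^ 2 := by
    intro p
    have h1 : -(g (idx p)) ≤ δ p := by rw [hδ' p]; exact le_max_right _ _
    have hx0 : 0 ≤ x (idx p) := hx (idx p)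
    rcases max_choice (-(x (idx p))) (-(g (idx p))) with h | h
    · rw [← hδ' p] at h
      nlinarith [mul_nonneg (by linarith : (0:ℝ) ≤ -δ p)
        (by linarith : (0:ℝ) ≤ g (idx p) + δ p)]
    · rw [← hδ' p] at h
      rw [h]
      exact le_of_eq (by ring)
  have hS : ∑ p : Fin P, δ p * g (idx p) ≤ -∑ p : Fin P, δ p ^ 2 := by
    have := Finset.sum_le_sum (fun p (_ : p ∈ Finset.univ) => hineq p)
    simpa using this
  rw [key, hsplit]
  linarith
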